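/- Let K/F be a Galois field extension of degree 2 with nontrivial automorphism σ, and J = !![0, 1; −1, 0]. Suppose h ∈ M₂(K) satisfies (transpose σ(h))·J·h = ν·J for some ν ∈ F with ν ≠ 0. Then there exist a ∈ K with a ≠ 0 and g ∈ GL₂(F) such that h = a·g; moreover ν = a·σ(a)·det g. Conversely, every matrix of the form a·g with a ∈ K^× and g ∈ GL₂(F) satisfies the relation with ν = a·σ(a)·det g. Hence the F-points of the unitary similitude group GU(1,1) are exactly K^×·GL₂(F). -/

import Mathlib

open Matrix

section aux

variable {K : Type*} [CommRing K]

lemma transpose_mul_J (A : Matrix (Fin 2) (Fin 2) K) :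
    Aᵀ * !![0, 1; -1, 0] = !![0, 1; -1, 0] * A.adjugate := by
  rw [Matrix.adjugate_fin_two]
  ext i j
  fin_cases i <;> fin_cases j <;>
    simp [Matrix.mul_apply, Fin.sum_univ_two]

lemma conj_J (A : Matrix (Fin 2) (Fin 2) K) :
    Aᵀ * !![0, 1; -1, 0] * A = A.det • !![0, 1; -1, 0] := by
  rw [transpose_mul_J, Matrix.mul_assoc, Matrix.adjugate_mul, Matrix.mul_smul, Matrix.mul_one]

lemma negJ_mul_J : !![(0:K), -1; 1, 0] * !![0, 1; -1, 0] = 1 := by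
  ext i j
  fin_cases i <;> fin_cases j <;>
    simp [Matrix.mul_apply, Fin.sum_univ_two, Matrix.one_apply]

end aux

lemma converse_calc {F K : Type*} [Field F] [Field K] [Algebra F K]
    (σ : K ≃ₐ[F] K) (a : K) (g : Matrix (Fin 2) (Fin 2) F) :
    ((a • g.map (algebraMap F K)).map ⇑σ)ᵀ * !![0, 1; -1, 0]
        * (a • g.map (algebraMap F K))
      = (a * σ a * algebraMap F K g.det) • !![0, 1; -1, 0] := by
  set M := g.map (algebraMap F K) with hM
  have h1 : (a • M).map ⇑σ = σ a • M := by
    ext i j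
    simp [hM, Matrix.map_apply, Matrix.smul_apply, smul_eq_mul, _root_.map_mul]
  have hdet : M.det = algebraMap F K g.det := ((algebraMap F K).map_det g).symm
  rw [h1, Matrix.transpose_smul, Matrix.smul_mul, Matrix.smul_mul, Matrix.mul_smul,
    conj_J, hdet, smul_smul, smul_smul]
  ring_nf

theorem gu11_points {F K : Type*} [Field F] [Field K] [Algebra F K] [IsGalois F K]
    (hdeg : Module.finrank F K = 2) (σ : K ≃ₐ[F] K) (hσ : σ ≠ AlgEquiv.refl) :
    (∀ (h : Matrix (Fin 2) (Fin 2) K) (ν : F), ν ≠ 0 →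
      (h.map ⇑σ)ᵀ * !![0, 1; -1, 0] * h = algebraMap F K ν • !![0, 1; -1, 0] →
      ∃ (a : K) (g : Matrix (Fin 2) (Fin 2) F), a ≠ 0 ∧ g.det ≠ 0 ∧
        h = a • g.map (algebraMap F K) ∧
        algebraMap F K ν = a * σ a * algebraMap F K g.det) ∧
    (∀ (a : K) (g : Matrix (Fin 2) (Fin 2) F), a ≠ 0 → g.det ≠ 0 →
      ((a • g.map (algebraMap F K)).map ⇑σ)ᵀ * !![0, 1; -1, 0]
          * (a • g.map (algebraMap F K))
        = (a * σ a * algebraMap F K g.det) • !![0, 1; -1, 0]) := by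
  classical
  have hfd : FiniteDimensional F K := by
    apply FiniteDimensional.of_finrank_pos; omega
  have hcard : Fintype.card (K ≃ₐ[F] K) = 2 := by
    rw [← Nat.card_eq_fintype_card, IsGalois.card_aut_eq_finrank, hdeg]
  have hσ1 : σ ≠ 1 := hσ
  -- σ has order 2
  have hσσ : σ * σ = 1 := by
    have hdvd : orderOf σ ∣ 2 := hcard ▸ orderOf_dvd_card
    have : orderOf σ = 2 := by
      rcases (Nat.dvd_prime Nat.prime_two).mp hdvd with h | h
      · exact absurd (orderOf_eq_one_iff.mp h) hσ1
      · exact h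
    calc σ * σ = σ ^ 2 := (sq σ).symm
      _ = 1 := this ▸ pow_orderOf_eq_one σ
  have hσσ' : ∀ x : K, σ (σ x) = x := fun x => by
    have := congrArg (fun f => f x) (congrArg DFunLike.coe hσσ)
    simpa using this
  -- every automorphism is 1 or σ
  have hall : ∀ τ : K ≃ₐ[F] K, τ = 1 ∨ τ = σ := by
    intro τ
    by_contra hcon
    push_neg at hcon
    have h3 : ({1, σ, τ} : Finset (K ≃ₐ[F] K)).card = 3 := by
      rw [Finset.card_insert_of_notMem (by simp [hσ1.symm, hcon.1.symm]),
        Finset.card_insert_of_notMem (by simp [hcon.2.symm]), Finset.card_singleton]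
    have := Finset.card_le_univ ({1, σ, τ} : Finset (K ≃ₐ[F] K))
    rw [h3, hcard] at this
    omega
  -- fixed points of σ lie in F
  have hfix : ∀ x : K, σ x = x → ∃ y : F, algebraMap F K y = x := by
    intro x hx
    have hbot : IntermediateField.fixedField (⊤ : Subgroup (K ≃ₐ[F] K))
        = (⊥ : IntermediateField F K) := by
      have := IsGalois.fixedField_fixingSubgroup (⊥ : IntermediateField F K)
      rwa [IntermediateField.fixingSubgroup_bot] at this
    have hxmem : x ∈ IntermediateField.fixedField (⊤ : Subgroup (K ≃ₐ[F] K)) := by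
      rintro ⟨τ, -⟩
      rcases hall τ with rfl | rfl
      · rfl
      · exact hx
    rw [hbot, IntermediateField.mem_bot] at hxmem
    obtain ⟨y, hy⟩ := hxmem
    exact ⟨y, hy⟩
  constructor
  · intro h ν hν E
    set c := algebraMap F K ν with hc
    have hc0 : c ≠ 0 := by
      simpa [hc] using (map_ne_zero (algebraMap F K)).mpr hν
    have hσc : σ c = c := σ.commutes ν
    -- turn the equation into adjugate form
    have E2 : !![0, 1; -1, 0] * ((h.map ⇑σ).adjugate * h) = !![0, 1; -1, 0] * (c • 1) := by
      rw [← Matrix.mul_assoc, ← transpose_mul_J, E, Matrix.mul_smul, Matrix.mul_one]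
    have E3 : (h.map ⇑σ).adjugate * h = c • 1 := by
      have := congrArg (fun X => !![(0:K), -1; 1, 0] * X) E2
      simp only [← Matrix.mul_assoc, negJ_mul_J, Matrix.one_mul] at this
      exact this
    -- determinant relation
    have hdeth : σ h.det * h.det = c ^ 2 := by
      have := congrArg Matrix.det E3
      rw [Matrix.det_mul, Matrix.det_adjugate, Matrix.det_smul, Matrix.det_one] at this
      have hmd : (h.map ⇑σ).det = σ h.det := (σ.toAlgHom.map_det h).symm
      simpa [hmd, Fintype.card_fin] using this
    have hdh0 : h.det ≠ 0 := by
      intro h0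
      rw [h0, mul_zero] at hdeth
      exact hc0 (pow_eq_zero_iff (n := 2) (by norm_num) |>.mp hdeth.symm)
    -- h.map σ = λ • h
    have E4 : c • h.map ⇑σ = σ h.det • h := by
      have := congrArg (fun X => h.map ⇑σ * X) E3
      simp only [← Matrix.mul_assoc, Matrix.mul_adjugate] at this
      have hmd : (h.map ⇑σ).det = σ h.det := (σ.toAlgHom.map_det h).symm
      rw [hmd] at this
      rw [Matrix.mul_smul, Matrix.mul_one] at this
      rw [Matrix.smul_mul, Matrix.one_mul] at this
      exact this.symm
    set lam : K := c⁻¹ * σ h.det with hlam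
    have E5 : ∀ i j, σ (h i j) = lam * h i j := by
      intro i j
      have := congrFun (congrFun E4 i) j
      simp only [Matrix.smul_apply, smul_eq_mul, Matrix.map_apply] at this
      calc σ (h i j) = c⁻¹ * (c * σ (h i j)) := (inv_mul_cancel_left₀ hc0 _).symm
        _ = c⁻¹ * (σ h.det * h i j) := by rw [this]
        _ = lam * h i j := by rw [hlam, mul_assoc]
    have hlam0 : lam ≠ 0 := by
      rw [hlam]
      exact mul_ne_zero (inv_ne_zero hc0) (fun h0 => hdh0 (by
        have := congrArg σ h0
        simpa [hσσ'] using this))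
    have hlamnorm : lam * σ lam = 1 := by
      rw [hlam, _root_.map_mul, map_inv₀, hσc, hσσ']
      field_simp
      linear_combination hdeth
    -- find a with σ a = lam * a
    obtain ⟨a, ha0, haσ⟩ : ∃ a : K, a ≠ 0 ∧ σ a = lam * a := by
      by_cases hl : lam = -1
      · obtain ⟨b, hb⟩ : ∃ b : K, σ b ≠ b := by
          by_contra hcon
          push_neg at hcon
          exact hσ (AlgEquiv.ext hcon)
        refine ⟨b - σ b, sub_ne_zero.mpr (fun h0 => hb h0.symm), ?_⟩
        rw [_root_.map_sub, hσσ', hl]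
        ring
      · refine ⟨1 + σ lam, ?_, ?_⟩
        · intro h0
          apply hl
          have : σ lam = -1 := by linear_combination h0
          have := congrArg σ this
          simpa [hσσ'] using this
        · rw [_root_.map_add, _root_.map_one, hσσ', mul_add, mul_one, hlamnorm]
          ring
    -- entries of a⁻¹ • h are fixed by σ
    have hentry : ∀ i j, ∃ y : F, algebraMap F K y = h i j * a⁻¹ := by
      intro i j
      apply hfix
      rw [_root_.map_mul, map_inv₀, E5, haσ, mul_inv]
      field_simp
    choose y hy using fun i j => hentry i j
    set g : Matrix (Fin 2) (Fin 2) F := Matrix.of y with hg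
    have hhg : h = a • g.map (algebraMap F K) := by
      ext i j
      simp only [Matrix.smul_apply, Matrix.map_apply, hg, Matrix.of_apply, smul_eq_mul]
      rw [hy i j]
      field_simp
    have hdetg : g.det ≠ 0 := by
      intro h0
      apply hdh0
      have hmapdet : (g.map ⇑(algebraMap F K)).det = algebraMap F K g.det :=
        ((algebraMap F K).map_det g).symm
      rw [hhg, Matrix.det_smul, hmapdet, h0]
      simp
    refine ⟨a, g, ha0, hdetg, hhg, ?_⟩
    have Ecalc := converse_calc σ a g
    rw [← hhg, E] at Ecalc
    have := congrFun (congrFun Ecalc 0) 1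
    simpa [Matrix.smul_apply] using this
  · intro a g _ _
    exact converse_calc σ a g
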